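/- Let G be a countable group acting minimally on a compact Hausdorff space X. The stabilizer URS S_G(X) equals the trivial URS {1} if and only if the action of G on X is topologically free. -/
import Mathlib

/-- The Chabauty topology on the space of subgroups of `G`. -/
noncomputable instance chabautyTopology {G : Type*} [Group G] :
    TopologicalSpace (Subgroup G) :=
  TopologicalSpace.induced
    (fun H : Subgroup G => fun g : G => @decide (g ∈ H) (Classical.propDecidable _))
    inferInstance

open Filter Topology MulAction

lemma chabauty_isClosed_bot {G : Type*} [Group G] :
    IsClosed ({(⊥ : Subgroup G)} : Set (Subgroup G)) := by
  set ι : Subgroup G → G → Bool :=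
    fun H : Subgroup G => fun g : G => @decide (g ∈ H) (Classical.propDecidable _) with hι
  have hpre : ({(⊥ : Subgroup G)} : Set (Subgroup G)) = ι ⁻¹' {ι ⊥} := by
    ext H
    simp only [Set.mem_singleton_iff, Set.mem_preimage]
    constructor
    · rintro rfl; rfl
    · intro h
      ext g
      have := congrFun h g
      simpa [hι, decide_eq_decide] using this
  rw [hpre]
  have hcont : Continuous ι := continuous_induced_dom
  exact isClosed_singleton.preimage hcont

lemma chabauty_continuousAt {G X : Type*} [Group G] [TopologicalSpace X] [T2Space X]
    [MulAction G X] (hcont : ∀ g : G, Continuous fun x : X => g • x) (y : X)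
    (hy : ∀ g : G, y ∉ frontier {x : X | g • x = x}) :
    ContinuousAt (fun z : X => MulAction.stabilizer G z) y := by
  rw [ContinuousAt, nhds_induced, tendsto_comap_iff]
  rw [show ((fun H : Subgroup G => fun g : G => @decide (g ∈ H) (Classical.propDecidable _)) ∘
      fun z : X => MulAction.stabilizer G z) =
      fun z : X => fun g : G => @decide (g ∈ MulAction.stabilizer G z) (Classical.propDecidable _)
      from rfl]
  rw [tendsto_pi_nhds]
  intro g
  have hFclosed : IsClosed {x : X | g • x = x} := isClosed_eq (hcont g) continuous_id
  have hy' := hy g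
  rw [frontier, hFclosed.closure_eq] at hy'
  rcases Classical.em (y ∈ {x : X | g • x = x}) with hmem | hmem
  · have hint : y ∈ interior {x : X | g • x = x} := by
      by_contra h
      exact hy' ⟨hmem, h⟩
    have hval : @decide (g ∈ MulAction.stabilizer G y) (Classical.propDecidable _) = true :=
      @decide_eq_true _ (Classical.propDecidable _) (mem_stabilizer_iff.mpr hmem)
    rw [hval]
    refine Tendsto.congr' ?_ tendsto_const_nhds
    filter_upwards [isOpen_interior.mem_nhds hint] with z hz
    have hzz' : z ∈ {x : X | g • x = x} := interior_subset hz
    have hzz : g • z = z := hzz'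
    exact (@decide_eq_true _ (Classical.propDecidable _)
      (mem_stabilizer_iff.mpr hzz)).symm
  · have hval : @decide (g ∈ MulAction.stabilizer G y) (Classical.propDecidable _) = false :=
      @decide_eq_false _ (Classical.propDecidable _) (fun h => hmem (mem_stabilizer_iff.mp h))
    rw [hval]
    refine Tendsto.congr' ?_ tendsto_const_nhds
    filter_upwards [hFclosed.isOpen_compl.mem_nhds hmem] with z hz
    exact (@decide_eq_false _ (Classical.propDecidable _)
      (fun h => hz (mem_stabilizer_iff.mp h))).symm

lemma dense_good_set {G X : Type*} [Group G] [Countable G] [TopologicalSpace X] [CompactSpace X]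
    [T2Space X] [MulAction G X] (hcont : ∀ g : G, Continuous fun x : X => g • x) :
    Dense (⋂ g : G, (frontier {x : X | g • x = x})ᶜ) := by
  refine dense_iInter_of_isOpen (fun g => isClosed_frontier.isOpen_compl) (fun g => ?_)
  have hFclosed : IsClosed {x : X | g • x = x} := isClosed_eq (hcont g) continuous_id
  exact interior_eq_empty_iff_dense_compl.mp (interior_frontier hFclosed)

theorem stabilizer_urs_trivial_iff_topologically_free {G X : Type*} [Group G] [Countable G]
    [TopologicalSpace X] [CompactSpace X] [T2Space X] [Nonempty X] [MulAction G X]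
    (hcont : ∀ g : G, Continuous fun x : X => g • x)
    (hfaithful : ∀ g : G, (∀ x : X, g • x = x) → g = 1)
    (hmin : ∀ x : X, Dense (MulAction.orbit G x)) :
    closure ((fun y : X => MulAction.stabilizer G y) ''
        {y : X | ContinuousAt (fun z : X => MulAction.stabilizer G z) y}) =
      {(⊥ : Subgroup G)} ↔
      ∀ g : G, g ≠ 1 → interior {x : X | g • x = x} = ∅ := by
  have hdense : Dense (⋂ g : G, (frontier {x : X | g • x = x})ᶜ) := dense_good_set hcont
  have hsub : (⋂ g : G, (frontier {x : X | g • x = x})ᶜ) ⊆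
      {y : X | ContinuousAt (fun z : X => MulAction.stabilizer G z) y} := by
    intro y hy
    exact chabauty_continuousAt hcont y (fun g => (Set.mem_iInter.mp hy g))
  constructor
  · intro h g hg
    by_contra hne
    rw [← Set.not_nonempty_iff_eq_empty] at hne
    push_neg at hne
    obtain ⟨y, hyD, hyU⟩ := hdense.inter_open_nonempty _ isOpen_interior hne
    have hyC : ContinuousAt (fun z : X => MulAction.stabilizer G z) y := hsub hyU
    have hmem : MulAction.stabilizer G y ∈ ({(⊥ : Subgroup G)} : Set (Subgroup G)) := by
      rw [← h]
      exact subset_closure ⟨y, hyC, rfl⟩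
    have hyy' : y ∈ {x : X | g • x = x} := interior_subset hyD
    have hyy : g • y = y := hyy'
    have hgstab : g ∈ MulAction.stabilizer G y := mem_stabilizer_iff.mpr hyy
    rw [Set.mem_singleton_iff] at hmem
    rw [hmem] at hgstab
    exact hg hgstab
  · intro htf
    have himg : (fun y : X => MulAction.stabilizer G y) ''
        {y : X | ContinuousAt (fun z : X => MulAction.stabilizer G z) y} =
        {(⊥ : Subgroup G)} := by
      apply Set.eq_singleton_iff_nonempty_unique_mem.mpr
      constructor
      · obtain ⟨y, hy⟩ := hdense.nonempty
        exact ⟨_, ⟨y, hsub hy, rfl⟩⟩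
      · rintro H ⟨y, hy, rfl⟩
        refine (Subgroup.eq_bot_iff_forall _).mpr (fun g hg => ?_)
        by_contra hg1
        have hint := htf g hg1
        have hc : ContinuousAt (fun z : X =>
            @decide (g ∈ MulAction.stabilizer G z) (Classical.propDecidable _)) y := by
          have h2 : Continuous (fun H : Subgroup G =>
              @decide (g ∈ H) (Classical.propDecidable _)) :=
            (continuous_apply g).comp (continuous_induced_dom :
              Continuous (fun H : Subgroup G => fun g : G =>
                @decide (g ∈ H) (Classical.propDecidable _)))
          exact h2.continuousAt.comp hy
        have hev : ∀ᶠ z in 𝓝 y,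
            (@decide (g ∈ MulAction.stabilizer G z) (Classical.propDecidable _)) = true := by
          have hval : @decide (g ∈ MulAction.stabilizer G y) (Classical.propDecidable _) = true :=
            @decide_eq_true _ (Classical.propDecidable _) hg
          have hmemnhds : ({true} : Set Bool) ∈
              𝓝 (@decide (g ∈ MulAction.stabilizer G y) (Classical.propDecidable _)) := by
            rw [hval]
            exact (isOpen_discrete _).mem_nhds rfl
          exact hc hmemnhds
        have hmemnhds : {x : X | g • x = x} ∈ 𝓝 y := by
          filter_upwards [hev] with z hz
          exact mem_stabilizer_iff.mp ((@of_decide_eq_true _ (Classical.propDecidable _) hz))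
        have hyi : y ∈ interior {x : X | g • x = x} := mem_interior_iff_mem_nhds.mpr hmemnhds
        rw [hint] at hyi
        exact hyi
    rw [himg]
    exact chabauty_isClosed_bot.closure_eq
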